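/- arXiv:2211.11184 — 2 statements merged into one kernel-verified Lean document; each statement's English description precedes it below -/
import Mathlib

section
/- Exact expected value of the Gaussian-smoothed χ² divergence of the empirical measure: Let μ be a Borel probability measure on ℝ^d, σ > 0, and for each n ≥ 1 let X_1,…,X_n be i.i.d. with law μ and μ̂_n the empirical measure. Then E[χ²(μ̂_n*γ_σ ‖ μ*γ_σ)] = (1/n)·∫_{ℝ^d} Var_μ(φ_σ(x−·))/(μ*φ_σ)(x) dx (both sides possibly +∞). In particular, if ∫_{ℝ^d} Var_μ(φ_σ(x−·))/(μ*φ_σ)(x) dx = ∞, then E[χ²(μ̂_n*γ_σ ‖ μ*γ_σ)] = ∞ for every n ∈ ℕ. -/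
open MeasureTheory

lemma integral_pi_prod {E : Type*} [MeasurableSpace E] (μ : Measure E) [SigmaFinite μ]
    {n : ℕ} (f : Fin n → E → ℝ) :
    ∫ x : Fin n → E, ∏ i, f i (x i) ∂(Measure.pi fun _ => μ) = ∏ i, ∫ x, f i x ∂μ := by
  letI : MeasureSpace E := ⟨μ⟩
  exact MeasureTheory.integral_fintype_prod_eq_prod (ι := Fin n) f (μ := fun _ => μ)

lemma exp_sq_mean_sub {E : Type*} [MeasurableSpace E] (μ : Measure E) [IsProbabilityMeasure μ]
    {n : ℕ} (hn : 1 ≤ n) (f : E → ℝ) (hm : Measurable f) {C : ℝ} (hb : ∀ y, |f y| ≤ C) :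
    ∫ xs : Fin n → E, ((n:ℝ)⁻¹ * ∑ i, f (xs i) - ∫ z, f z ∂μ)^2 ∂(Measure.pi fun _ => μ)
      = (∫ y, (f y - ∫ z, f z ∂μ)^2 ∂μ) / n := by
  have hn0 : (n:ℝ) ≠ 0 := Nat.cast_ne_zero.2 (by omega)
  set s : ℝ := ∫ z, f z ∂μ with hs
  set Z : E → ℝ := fun y => f y - s with hZ
  have hfi : Integrable f μ := by
    refine (integrable_const C).mono' hm.aestronglyMeasurable (ae_of_all _ fun y => ?_)
    simpa using hb y
  have hZm : Measurable Z := hm.sub measurable_const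
  have hZb : ∀ y, |Z y| ≤ C + |s| := fun y =>
    (abs_sub _ _).trans (by gcongr; exact hb y)
  have hZ0 : ∫ y, Z y ∂μ = 0 := by
    simp only [hZ]
    rw [integral_sub hfi (integrable_const s), integral_const]
    simp [hs]
  -- cross terms
  have cross : ∀ i j : Fin n, ∫ xs : Fin n → E, Z (xs i) * Z (xs j) ∂(Measure.pi fun _ => μ)
      = if i = j then ∫ y, Z y ^ 2 ∂μ else 0 := by
    intro i j
    have hprod : ∀ xs : Fin n → E, Z (xs i) * Z (xs j)
        = ∏ k, ((if k = i then Z (xs k) else 1) * (if k = j then Z (xs k) else 1)) := by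
      intro xs
      rw [Finset.prod_mul_distrib, Finset.prod_ite_eq', Finset.prod_ite_eq']
      simp
    simp_rw [hprod]
    rw [integral_pi_prod μ (fun k y => (if k = i then Z y else 1) * (if k = j then Z y else 1))]
    by_cases hij : i = j
    · subst hij
      rw [if_pos rfl, Finset.prod_eq_single i]
      · simp [← pow_two]
      · intro k _ hk
        simp [hk]
      · simp
    · rw [if_neg hij, Finset.prod_eq_zero (Finset.mem_univ i)]
      simp only [if_pos rfl, if_neg hij, mul_one]
      exact hZ0
  -- integrability of cross terms
  have hZZint : ∀ i j : Fin n, Integrable (fun xs : Fin n → E => Z (xs i) * Z (xs j))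
      (Measure.pi fun _ => μ) := by
    intro i j
    refine (integrable_const ((C + |s|) * (C + |s|))).mono'
      (((hZm.comp (measurable_pi_apply i)).mul
        (hZm.comp (measurable_pi_apply j))).aestronglyMeasurable)
      (ae_of_all _ fun xs => ?_)
    rw [Real.norm_eq_abs, abs_mul]
    have h1 := hZb (xs i); have h2 := hZb (xs j)
    have h3 : (0:ℝ) ≤ |Z (xs i)| := abs_nonneg _
    have h4 : (0:ℝ) ≤ |Z (xs j)| := abs_nonneg _
    nlinarith
  have hemp : ∀ xs : Fin n → E, (n:ℝ)⁻¹ * ∑ i, f (xs i) - s = (n:ℝ)⁻¹ * ∑ i, Z (xs i) := by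
    intro xs
    simp only [hZ, Finset.sum_sub_distrib, Finset.sum_const, Finset.card_univ,
      Fintype.card_fin, nsmul_eq_mul]
    field_simp
  calc ∫ xs : Fin n → E, ((n:ℝ)⁻¹ * ∑ i, f (xs i) - s)^2 ∂(Measure.pi fun _ => μ)
      = ∫ xs : Fin n → E, ((n:ℝ)⁻¹)^2 * ∑ i, ∑ j, Z (xs i) * Z (xs j)
          ∂(Measure.pi fun _ => μ) := by
        apply integral_congr_ae; filter_upwards with xs
        rw [hemp xs, mul_pow]
        congr 1
        rw [sq, Finset.sum_mul_sum]
    _ = ((n:ℝ)⁻¹)^2 * ∑ i, ∑ j, ∫ xs : Fin n → E, Z (xs i) * Z (xs j)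
          ∂(Measure.pi fun _ => μ) := by
        rw [integral_const_mul]
        congr 1
        rw [integral_finset_sum _ (fun i _ => integrable_finset_sum _ (fun j _ => hZZint i j))]
        exact Finset.sum_congr rfl fun i _ =>
          integral_finset_sum _ (fun j _ => hZZint i j)
    _ = ((n:ℝ)⁻¹)^2 * ∑ i : Fin n, ∫ y, Z y ^ 2 ∂μ := by
        congr 1
        refine Finset.sum_congr rfl fun i _ => ?_
        simp_rw [cross]
        simp
    _ = (∫ y, Z y ^ 2 ∂μ) / n := by
        rw [Finset.sum_const, Finset.card_univ, Fintype.card_fin, nsmul_eq_mul]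
        field_simp

open scoped ENNReal

lemma lintegral_chisq_pointwise {E : Type*} [MeasurableSpace E] (μ : Measure E)
    [IsProbabilityMeasure μ] {n : ℕ} (hn : 1 ≤ n) (f : E → ℝ) (hm : Measurable f)
    {C : ℝ} (hfpos : ∀ y, 0 < f y) (hb : ∀ y, f y ≤ C)
    {s : ℝ} (hs : s = ∫ z, f z ∂μ) (hspos : 0 < s) :
    ∫⁻ xs : Fin n → E, ENNReal.ofReal
        ((((n:ℝ)⁻¹ * ∑ i, f (xs i)) / s - 1)^2 * s) ∂(Measure.pi fun _ => μ)
      = (n:ℝ≥0∞)⁻¹ * ENNReal.ofReal ((∫ y, (f y - s)^2 ∂μ) / s) := by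
  have hn0 : (n:ℝ) ≠ 0 := Nat.cast_ne_zero.2 (by omega)
  have hnpos : (0:ℝ) < n := Nat.cast_pos.2 (by omega)
  have halg : ∀ xs : Fin n → E,
      (((n:ℝ)⁻¹ * ∑ i, f (xs i)) / s - 1)^2 * s
      = ((n:ℝ)⁻¹ * ∑ i, f (xs i) - s)^2 * s⁻¹ := by
    intro xs; field_simp
  simp_rw [halg]
  rw [lintegral_congr (g := fun xs : Fin n → E =>
      ENNReal.ofReal (((n:ℝ)⁻¹ * ∑ i, f (xs i) - s)^2) * ENNReal.ofReal s⁻¹)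
      (fun xs => ENNReal.ofReal_mul (sq_nonneg _))]
  rw [lintegral_mul_const' (ENNReal.ofReal s⁻¹) _ ENNReal.ofReal_ne_top]
  have hempb : ∀ xs : Fin n → E,
      0 ≤ (n:ℝ)⁻¹ * ∑ i, f (xs i) ∧ (n:ℝ)⁻¹ * ∑ i, f (xs i) ≤ C := by
    intro xs
    constructor
    · exact mul_nonneg (by positivity) (Finset.sum_nonneg fun i _ => (hfpos _).le)
    · have h1 : ∑ i, f (xs i) ≤ n * C := by
        calc ∑ i, f (xs i) ≤ ∑ _i : Fin n, C := Finset.sum_le_sum fun i _ => hb _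
          _ = n * C := by simp [mul_comm]
      calc (n:ℝ)⁻¹ * ∑ i, f (xs i) ≤ (n:ℝ)⁻¹ * (n * C) :=
            mul_le_mul_of_nonneg_left h1 (by positivity)
        _ = C := by field_simp
  have hint : Integrable (fun xs : Fin n → E =>
      ((n:ℝ)⁻¹ * ∑ i, f (xs i) - s)^2) (Measure.pi fun _ => μ) := by
    have hmm : Measurable fun xs : Fin n → E => ((n:ℝ)⁻¹ * ∑ i, f (xs i) - s)^2 := by
      apply Measurable.pow_const
      apply Measurable.sub _ measurable_const
      exact (Finset.measurable_sum _ fun i _ => hm.comp (measurable_pi_apply i)).const_mul _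
    refine (integrable_const ((C + |s|)^2)).mono' hmm.aestronglyMeasurable
      (ae_of_all _ fun xs => ?_)
    rw [Real.norm_eq_abs, abs_of_nonneg (sq_nonneg _)]
    obtain ⟨h1, h2⟩ := hempb xs
    nlinarith [abs_nonneg s, le_abs_self s, neg_abs_le s]
  rw [← ofReal_integral_eq_lintegral_ofReal hint (ae_of_all _ fun xs => sq_nonneg _)]
  have hb' : ∀ y, |f y| ≤ C := fun y => by
    rw [abs_of_pos (hfpos y)]; exact hb y
  have hkey := exp_sq_mean_sub μ hn f hm hb'
  rw [← hs] at hkey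
  rw [hkey]
  have hV : 0 ≤ ∫ y, (f y - s)^2 ∂μ := integral_nonneg fun y => sq_nonneg _
  rw [div_eq_mul_inv (∫ y, (f y - s)^2 ∂μ) (n:ℝ), ENNReal.ofReal_mul hV,
    div_eq_mul_inv (∫ y, (f y - s)^2 ∂μ) s, ENNReal.ofReal_mul hV,
    ENNReal.ofReal_inv_of_pos hnpos, ENNReal.ofReal_natCast]
  ring

noncomputable section

/-- The density of the centered isotropic Gaussian `N(0, σ² I_d)` on `ℝ^d`. -/
def gaussDensity (d : ℕ) (σ : ℝ) (x : EuclideanSpace ℝ (Fin d)) : ℝ :=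
  (2 * Real.pi * σ ^ 2) ^ (-(d : ℝ) / 2) * Real.exp (-‖x‖ ^ 2 / (2 * σ ^ 2))

/-- The Lebesgue density of `μ * γ_σ`: `(μ*φ_σ)(x) = ∫ φ_σ(x−y) dμ(y)`. -/
def smoothDensity (d : ℕ) (σ : ℝ) (μ : Measure (EuclideanSpace ℝ (Fin d)))
    (x : EuclideanSpace ℝ (Fin d)) : ℝ :=
  ∫ y, gaussDensity d σ (x - y) ∂μ

/-- The Lebesgue density of `μ̂ₙ * γ_σ`, the smoothed empirical measure of the
sample `xs : Fin n → ℝ^d`. -/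
def empSmoothDensity (d : ℕ) (σ : ℝ) {n : ℕ} (xs : Fin n → EuclideanSpace ℝ (Fin d))
    (x : EuclideanSpace ℝ (Fin d)) : ℝ :=
  (n : ℝ)⁻¹ * ∑ i, gaussDensity d σ (x - xs i)

/-- `Var_μ(φ_σ(x−·))`, the variance of `φ_σ(x−X)` for `X ∼ μ`. -/
def smoothVar (d : ℕ) (σ : ℝ) (μ : Measure (EuclideanSpace ℝ (Fin d)))
    (x : EuclideanSpace ℝ (Fin d)) : ℝ :=
  ∫ y, (gaussDensity d σ (x - y) - smoothDensity d σ μ x) ^ 2 ∂μ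

/-- Exact expected value of the Gaussian-smoothed χ² divergence of the empirical measure:
`E[χ²(μ̂ₙ*γ_σ‖μ*γ_σ)] = (1/n) ∫ Var_μ(φ_σ(x−·))/(μ*φ_σ)(x) dx` (both sides possibly `∞`);
in particular the expectation is infinite for every `n` when the integral diverges. -/
theorem expected_smoothed_chisq
    (d : ℕ) (σ : ℝ) (hσ : 0 < σ)
    (μ : Measure (EuclideanSpace ℝ (Fin d))) [IsProbabilityMeasure μ] :
    (∀ n : ℕ, 1 ≤ n →
      ∫⁻ xs, (∫⁻ x, ENNReal.ofReal
          ((empSmoothDensity d σ xs x / smoothDensity d σ μ x - 1) ^ 2 *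
            smoothDensity d σ μ x))
        ∂(Measure.pi fun _ : Fin n => μ)
      = (n : ℝ≥0∞)⁻¹ * ∫⁻ x, ENNReal.ofReal (smoothVar d σ μ x / smoothDensity d σ μ x))
    ∧
    ((∫⁻ x, ENNReal.ofReal (smoothVar d σ μ x / smoothDensity d σ μ x) = ⊤) →
      ∀ n : ℕ, 1 ≤ n →
        ∫⁻ xs, (∫⁻ x, ENNReal.ofReal
            ((empSmoothDensity d σ xs x / smoothDensity d σ μ x - 1) ^ 2 *
              smoothDensity d σ μ x))
          ∂(Measure.pi fun _ : Fin n => μ) = ⊤) := by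
  classical
  set C := (2 * Real.pi * σ ^ 2) ^ (-(d:ℝ)/2) with hCdef
  have h2 : (0:ℝ) < 2 * Real.pi * σ ^ 2 := by positivity
  have hC : 0 < C := Real.rpow_pos_of_pos h2 _
  have hgpos : ∀ z : EuclideanSpace ℝ (Fin d), 0 < gaussDensity d σ z := fun z =>
    mul_pos hC (Real.exp_pos _)
  have hgle : ∀ z, gaussDensity d σ z ≤ C := by
    intro z
    have h1 : Real.exp (-‖z‖^2/(2*σ^2)) ≤ 1 := by
      rw [Real.exp_le_one_iff]
      apply div_nonpos_of_nonpos_of_nonneg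
      · simp [sq_nonneg]
      · positivity
    calc gaussDensity d σ z = C * Real.exp (-‖z‖^2/(2*σ^2)) := rfl
      _ ≤ C * 1 := by gcongr
      _ = C := mul_one C
  have hgcont : Continuous (gaussDensity d σ) := by
    unfold gaussDensity
    exact continuous_const.mul
      (Real.continuous_exp.comp (((continuous_norm.pow 2).neg).div_const _))
  have hsm : Measurable (smoothDensity d σ μ) := by
    have h : StronglyMeasurable fun p : EuclideanSpace ℝ (Fin d) × EuclideanSpace ℝ (Fin d) =>
        gaussDensity d σ (p.1 - p.2) :=
      (hgcont.comp (continuous_fst.sub continuous_snd)).stronglyMeasurable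
    exact h.integral_prod_right'.measurable
  have hfim : ∀ x, Integrable (fun y => gaussDensity d σ (x - y)) μ := by
    intro x
    refine (integrable_const C).mono'
      ((hgcont.comp (continuous_const.sub continuous_id)).aestronglyMeasurable)
      (ae_of_all _ fun y => ?_)
    rw [Real.norm_eq_abs, abs_of_pos (hgpos _)]; exact hgle _
  have hspos : ∀ x, 0 < smoothDensity d σ μ x := by
    intro x
    rw [smoothDensity, integral_pos_iff_support_of_nonneg_ae
      (ae_of_all _ fun y => (hgpos _).le) (hfim x)]
    have h : (Function.support fun y => gaussDensity d σ (x - y)) = Set.univ :=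
      Set.eq_univ_of_forall fun y => (hgpos _).ne'
    rw [h]
    simp
  have main : ∀ n : ℕ, 1 ≤ n →
      ∫⁻ xs, (∫⁻ x, ENNReal.ofReal
          ((empSmoothDensity d σ xs x / smoothDensity d σ μ x - 1) ^ 2 *
            smoothDensity d σ μ x))
        ∂(Measure.pi fun _ : Fin n => μ)
      = (n : ℝ≥0∞)⁻¹ * ∫⁻ x, ENNReal.ofReal (smoothVar d σ μ x / smoothDensity d σ μ x) := by
    intro n hn
    have hn0 : (n:ℝ) ≠ 0 := Nat.cast_ne_zero.2 (by omega)
    have hempc : Continuous fun p :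
        (Fin n → EuclideanSpace ℝ (Fin d)) × EuclideanSpace ℝ (Fin d) =>
        empSmoothDensity d σ p.1 p.2 := by
      unfold empSmoothDensity
      refine continuous_const.mul (continuous_finset_sum _ fun i _ => ?_)
      exact hgcont.comp (continuous_snd.sub ((continuous_apply i).comp continuous_fst))
    have hFmeas : AEMeasurable (Function.uncurry fun (xs : Fin n → EuclideanSpace ℝ (Fin d))
        (x : EuclideanSpace ℝ (Fin d)) =>
        ENNReal.ofReal ((empSmoothDensity d σ xs x / smoothDensity d σ μ x - 1) ^ 2 *
          smoothDensity d σ μ x)) ((Measure.pi fun _ : Fin n => μ).prod volume) := by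
      apply Measurable.aemeasurable
      apply ENNReal.measurable_ofReal.comp
      exact (((hempc.measurable.div (hsm.comp measurable_snd)).sub
        measurable_const).pow_const 2).mul (hsm.comp measurable_snd)
    rw [lintegral_lintegral_swap hFmeas]
    have hpt : ∀ x, ∫⁻ xs, ENNReal.ofReal
        ((empSmoothDensity d σ xs x / smoothDensity d σ μ x - 1) ^ 2 *
          smoothDensity d σ μ x) ∂(Measure.pi fun _ : Fin n => μ)
        = (n:ℝ≥0∞)⁻¹ * ENNReal.ofReal (smoothVar d σ μ x / smoothDensity d σ μ x) := by
      intro x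
      exact lintegral_chisq_pointwise μ hn (fun y => gaussDensity d σ (x - y))
        ((hgcont.comp (continuous_const.sub continuous_id)).measurable)
        (fun y => hgpos _) (fun y => hgle _) rfl (hspos x)
    rw [lintegral_congr hpt, lintegral_const_mul' _ _
      (ENNReal.inv_ne_top.2 (by exact_mod_cast hn0))]
  refine ⟨main, fun h n hn => ?_⟩
  rw [main n hn, h, ENNReal.mul_top]
  exact ENNReal.inv_ne_zero.2 (ENNReal.natCast_ne_top n)
end
end

section
/- Moment bound for the L¹ norm of the standard deviation of the Gaussian-smoothed empirical process: Let μ be a Borel probability measure on ℝ^d, σ > 0, and X ∼ μ. Then ∫_{ℝ^d} √(Var_μ(φ_σ(x−·))) dx ≤ 8^{d/2} + (2^{d/2+1}/(σ^d·Γ(d/2)))·∫_0^∞ t^{d−1}·√(ℙ(‖X‖ > t)) dt, where Γ is the Gamma function. Consequently, if E[‖X‖^{2d+ε}] < ∞ for some ε > 0, then ∫_{ℝ^d} √(Var_μ(φ_σ(x−·))) dx < ∞. -/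
open MeasureTheory Filter Topology Set
open scoped ENNReal

noncomputable section

-- auxiliary notation
local notation "E" d => EuclideanSpace ℝ (Fin d)

lemma gaussDensity_cont (d : ℕ) (σ : ℝ) : Continuous (gaussDensity d σ) := by
  unfold gaussDensity; fun_prop

lemma gaussDensity_nonneg (d : ℕ) (σ : ℝ) (hσ : 0 < σ) (x : E d) : 0 ≤ gaussDensity d σ x := by
  unfold gaussDensity; positivity

lemma gaussDensity_le (d : ℕ) (σ : ℝ) (hσ : 0 < σ) (x : E d) :
    gaussDensity d σ x ≤ (2 * Real.pi * σ ^ 2) ^ (-(d : ℝ) / 2) := by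
  unfold gaussDensity
  have h1 : Real.exp (-‖x‖ ^ 2 / (2 * σ ^ 2)) ≤ 1 := by
    rw [Real.exp_le_one_iff]
    have : (0:ℝ) < 2 * σ ^ 2 := by positivity
    apply div_nonpos_of_nonpos_of_nonneg (by simp [sq_nonneg]) this.le
  have hb : (0:ℝ) < (2 * Real.pi * σ ^ 2) ^ (-(d : ℝ) / 2) :=
    Real.rpow_pos_of_pos (by positivity) _
  nlinarith

lemma smoothVar_le_secondMoment (d : ℕ) (σ : ℝ) (hσ : 0 < σ)
    (μ : Measure (E d)) [IsProbabilityMeasure μ] (x : E d) :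
    smoothVar d σ μ x ≤ ∫ y, gaussDensity d σ (x - y) ^ 2 ∂μ := by
  set b : ℝ := (2 * Real.pi * σ ^ 2) ^ (-(d : ℝ) / 2) with hbdef
  have hb : 0 < b := Real.rpow_pos_of_pos (by positivity) _
  set φ : (E d) → ℝ := fun y => gaussDensity d σ (x - y) with hφdef
  have hφc : Continuous φ := (gaussDensity_cont d σ).comp (continuous_const.sub continuous_id)
  have hφ0 : ∀ y, 0 ≤ φ y := fun y => gaussDensity_nonneg d σ hσ _
  have hφb : ∀ y, φ y ≤ b := fun y => gaussDensity_le d σ hσ _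
  have hint : Integrable φ μ := by
    refine ⟨hφc.aestronglyMeasurable, HasFiniteIntegral.of_bounded (C := b) ?_⟩
    filter_upwards with y
    rw [Real.norm_eq_abs, abs_of_nonneg (hφ0 y)]; exact hφb y
  have hint2 : Integrable (fun y => φ y ^ 2) μ := by
    refine ⟨(hφc.pow 2).aestronglyMeasurable, HasFiniteIntegral.of_bounded (C := b ^ 2) ?_⟩
    filter_upwards with y
    rw [Real.norm_eq_abs, abs_of_nonneg (by positivity)]
    exact pow_le_pow_left₀ (hφ0 y) (hφb y) 2
  set m : ℝ := smoothDensity d σ μ x with hmdef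
  have hm : m = ∫ y, φ y ∂μ := rfl
  have expand : smoothVar d σ μ x = ∫ y, (φ y ^ 2 - 2 * m * φ y + m ^ 2) ∂μ := by
    unfold smoothVar
    congr 1; funext y; ring
  rw [expand, integral_add (show Integrable (fun y => φ y ^ 2 - 2 * m * φ y) μ from hint2.sub (hint.const_mul (2 * m))) (integrable_const _),
    integral_sub hint2 (hint.const_mul (2 * m)), integral_const_mul, ← hm, integral_const,
    probReal_univ]
  simp only [ENNReal.toReal_one, smul_eq_mul, one_mul]
  nlinarith [sq_nonneg m]

lemma secondMoment_split (d : ℕ) (σ : ℝ) (hσ : 0 < σ)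
    (μ : Measure (E d)) [IsProbabilityMeasure μ] (x : E d) :
    ∫ y, gaussDensity d σ (x - y) ^ 2 ∂μ ≤
      ((2 * Real.pi * σ ^ 2) ^ (-(d : ℝ) / 2)) ^ 2 * Real.exp (-‖x‖ ^ 2 / (4 * σ ^ 2)) +
      ((2 * Real.pi * σ ^ 2) ^ (-(d : ℝ) / 2)) ^ 2 * (μ {y | ‖x‖ / 2 < ‖y‖}).toReal := by
  set b : ℝ := (2 * Real.pi * σ ^ 2) ^ (-(d : ℝ) / 2) with hbdef
  have hb : 0 < b := Real.rpow_pos_of_pos (by positivity) _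
  set S : Set (E d) := {y | ‖x‖ / 2 < ‖y‖} with hSdef
  have hS : MeasurableSet S := measurableSet_lt measurable_const measurable_norm
  have hptwise : ∀ y, gaussDensity d σ (x - y) ^ 2 ≤
      b ^ 2 * Real.exp (-‖x‖ ^ 2 / (4 * σ ^ 2)) + S.indicator (fun _ => b ^ 2) y := by
    intro y
    have hφ0 := gaussDensity_nonneg d σ hσ (x - y)
    have hφb := gaussDensity_le d σ hσ (x - y)
    by_cases hy : y ∈ S
    · rw [Set.indicator_of_mem hy]
      have h1 : gaussDensity d σ (x - y) ^ 2 ≤ b ^ 2 := pow_le_pow_left₀ hφ0 hφb 2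
      have h2 : 0 ≤ b ^ 2 * Real.exp (-‖x‖ ^ 2 / (4 * σ ^ 2)) := by positivity
      linarith
    · rw [Set.indicator_of_notMem hy, add_zero]
      have hy' : ‖y‖ ≤ ‖x‖ / 2 := le_of_not_gt hy
      have hxy : ‖x‖ / 2 ≤ ‖x - y‖ := by
        have := norm_sub_norm_le x y
        have h0 : 0 ≤ ‖x‖ := norm_nonneg x
        calc ‖x‖ / 2 ≤ ‖x‖ - ‖y‖ := by linarith
          _ ≤ ‖x - y‖ := norm_sub_norm_le x y
      have hsq : ‖x‖ ^ 2 / 4 ≤ ‖x - y‖ ^ 2 := by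
        have h2 : (‖x‖ / 2) ^ 2 ≤ ‖x - y‖ ^ 2 := pow_le_pow_left₀ (by positivity) hxy 2
        calc ‖x‖ ^ 2 / 4 = (‖x‖ / 2) ^ 2 := by ring
          _ ≤ _ := h2
      have : gaussDensity d σ (x - y) ^ 2 = b ^ 2 * Real.exp (-‖x - y‖ ^ 2 / (σ ^ 2)) := by
        unfold gaussDensity
        rw [mul_pow, ← Real.exp_nat_mul]
        congr 2
        field_simp
        ring
      rw [this]
      have hexp : Real.exp (-‖x - y‖ ^ 2 / σ ^ 2) ≤ Real.exp (-‖x‖ ^ 2 / (4 * σ ^ 2)) := by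
        apply Real.exp_le_exp.2
        rw [div_le_div_iff₀ (by positivity) (by positivity)]
        nlinarith [sq_nonneg σ]
      nlinarith
  have hrhs_int : Integrable (fun y => b ^ 2 * Real.exp (-‖x‖ ^ 2 / (4 * σ ^ 2)) +
      S.indicator (fun _ => b ^ 2) y) μ :=
    (integrable_const _).add ((integrable_const _).indicator hS)
  have hlhs_int : Integrable (fun y => gaussDensity d σ (x - y) ^ 2) μ := by
    have hφc : Continuous fun y : E d => gaussDensity d σ (x - y) :=
      (gaussDensity_cont d σ).comp (continuous_const.sub continuous_id)
    refine ⟨(hφc.pow 2).aestronglyMeasurable, HasFiniteIntegral.of_bounded (C := b ^ 2) ?_⟩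
    filter_upwards with y
    rw [Real.norm_eq_abs, abs_of_nonneg (by positivity)]
    exact pow_le_pow_left₀ (gaussDensity_nonneg d σ hσ _) (gaussDensity_le d σ hσ _) 2
  calc ∫ y, gaussDensity d σ (x - y) ^ 2 ∂μ ≤
      ∫ y, (b ^ 2 * Real.exp (-‖x‖ ^ 2 / (4 * σ ^ 2)) + S.indicator (fun _ => b ^ 2) y) ∂μ :=
        integral_mono hlhs_int hrhs_int hptwise
    _ = b ^ 2 * Real.exp (-‖x‖ ^ 2 / (4 * σ ^ 2)) + b ^ 2 * (μ S).toReal := by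
        rw [integral_add (integrable_const _) ((integrable_const _).indicator hS),
          integral_const, integral_indicator_const _ hS, probReal_univ]
        simp [mul_comm, Measure.real]

lemma real_sqrt_add_le (a c : ℝ) (ha : 0 ≤ a) (hc : 0 ≤ c) :
    Real.sqrt (a + c) ≤ Real.sqrt a + Real.sqrt c := by
  have h := Real.sqrt_le_sqrt (show a + c ≤ (Real.sqrt a + Real.sqrt c) ^ 2 by
    nlinarith [Real.sq_sqrt ha, Real.sq_sqrt hc, Real.sqrt_nonneg a, Real.sqrt_nonneg c])
  rwa [Real.sqrt_sq (by positivity)] at h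

lemma sqrt_smoothVar_le (d : ℕ) (σ : ℝ) (hσ : 0 < σ)
    (μ : Measure (E d)) [IsProbabilityMeasure μ] (x : E d) :
    Real.sqrt (smoothVar d σ μ x) ≤
      (2 * Real.pi * σ ^ 2) ^ (-(d : ℝ) / 2) * Real.exp (-‖x‖ ^ 2 / (8 * σ ^ 2)) +
      (2 * Real.pi * σ ^ 2) ^ (-(d : ℝ) / 2) * Real.sqrt ((μ {y | ‖x‖ / 2 < ‖y‖}).toReal) := by
  set b : ℝ := (2 * Real.pi * σ ^ 2) ^ (-(d : ℝ) / 2) with hbdef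
  have hb : 0 < b := Real.rpow_pos_of_pos (by positivity) _
  have h1 : Real.sqrt (smoothVar d σ μ x) ≤
      Real.sqrt (b ^ 2 * Real.exp (-‖x‖ ^ 2 / (4 * σ ^ 2)) +
        b ^ 2 * (μ {y | ‖x‖ / 2 < ‖y‖}).toReal) :=
    Real.sqrt_le_sqrt ((smoothVar_le_secondMoment d σ hσ μ x).trans
      (secondMoment_split d σ hσ μ x))
  have h2 := real_sqrt_add_le (b ^ 2 * Real.exp (-‖x‖ ^ 2 / (4 * σ ^ 2)))
    (b ^ 2 * (μ {y | ‖x‖ / 2 < ‖y‖}).toReal) (by positivity)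
    (by positivity)
  have e1 : Real.sqrt (b ^ 2 * Real.exp (-‖x‖ ^ 2 / (4 * σ ^ 2))) =
      b * Real.exp (-‖x‖ ^ 2 / (8 * σ ^ 2)) := by
    have : b ^ 2 * Real.exp (-‖x‖ ^ 2 / (4 * σ ^ 2)) =
        (b * Real.exp (-‖x‖ ^ 2 / (8 * σ ^ 2))) ^ 2 := by
      rw [mul_pow, ← Real.exp_nat_mul]
      congr 2
      field_simp
      ring
    rw [this, Real.sqrt_sq (by positivity)]
  have e2 : Real.sqrt (b ^ 2 * (μ {y | ‖x‖ / 2 < ‖y‖}).toReal) =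
      b * Real.sqrt ((μ {y | ‖x‖ / 2 < ‖y‖}).toReal) := by
    rw [Real.sqrt_mul (by positivity), Real.sqrt_sq hb.le]
  rw [e1, e2] at h2
  exact h1.trans h2
noncomputable section

lemma my_lintegral_fun_norm_addHaar {V : Type*} [NormedAddCommGroup V] [NormedSpace ℝ V]
    [MeasurableSpace V] [BorelSpace V] [Nontrivial V] [FiniteDimensional ℝ V]
    (μ : Measure V) [μ.IsAddHaarMeasure] (f : ℝ → ℝ≥0∞) (hf : Measurable f) :
    ∫⁻ x, f ‖x‖ ∂μ = μ.toSphere univ *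
      ∫⁻ y in Ioi (0 : ℝ), ENNReal.ofReal (y ^ (Module.finrank ℝ V - 1)) * f y :=
  calc
    ∫⁻ x, f ‖x‖ ∂μ = ∫⁻ x : ({(0)}ᶜ : Set V), f ‖x.1‖ ∂(μ.comap (↑)) := by
      rw [lintegral_subtype_comap (measurableSet_singleton _).compl fun x ↦ f ‖x‖,
        restrict_compl_singleton]
    _ = ∫⁻ x : Metric.sphere (0 : V) 1 × Ioi (0 : ℝ), f x.2
        ∂μ.toSphere.prod (.volumeIoiPow (Module.finrank ℝ V - 1)) :=
      by
        rw [← μ.measurePreserving_homeomorphUnitSphereProd.lintegral_comp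
          (f := fun x : Metric.sphere (0 : V) 1 × Ioi (0 : ℝ) => f x.2)
          ((hf.comp measurable_subtype_coe).comp measurable_snd)]
        congr 1; funext x; simp [homeomorphUnitSphereProd, homeomorphSphereProd]
    _ = μ.toSphere univ * ∫⁻ x : Ioi (0 : ℝ), f x ∂(Measure.volumeIoiPow (Module.finrank ℝ V - 1)) := by
      rw [lintegral_prod (fun x : Metric.sphere (0 : V) 1 × Ioi (0 : ℝ) => f x.2)
        (((hf.comp measurable_subtype_coe).comp measurable_snd).aemeasurable)]
      simp only [lintegral_const]
      rw [mul_comm]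
    _ = _ := by
      rw [Measure.volumeIoiPow, lintegral_withDensity_eq_lintegral_mul _
        (by fun_prop) (show Measurable fun x : Ioi (0:ℝ) => f x.1 from hf.comp measurable_subtype_coe)]
      simp only [Pi.mul_apply]
      rw [lintegral_subtype_comap measurableSet_Ioi
        (fun y => ENNReal.ofReal (y ^ (Module.finrank ℝ V - 1)) * f y)]

lemma lintegral_Ioi_scale (h : ℝ → ℝ≥0∞) (hm : Measurable h) :
    ∫⁻ r in Ioi (0:ℝ), h r = 2 * ∫⁻ t in Ioi (0:ℝ), h (2 * t) := by
  have key : ∫⁻ t, (Ioi (0:ℝ)).indicator h (2 * t) =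
      ENNReal.ofReal |2⁻¹| * ∫⁻ r, (Ioi (0:ℝ)).indicator h r := by
    rw [← smul_eq_mul (ENNReal.ofReal |2⁻¹|), ← lintegral_smul_measure, ← Real.map_volume_mul_left (two_ne_zero),
      lintegral_map (hm.indicator measurableSet_Ioi) (measurable_const_mul 2)]
  have ind : ∀ t : ℝ, (Ioi (0:ℝ)).indicator h (2 * t) =
      (Ioi (0:ℝ)).indicator (fun t => h (2 * t)) t := by
    intro t
    by_cases ht : t ∈ Ioi (0:ℝ)
    · rw [indicator_of_mem ht, indicator_of_mem (by simpa using by linarith [ht.out] : 2 * t ∈ Ioi (0:ℝ))]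
    · rw [indicator_of_notMem ht, indicator_of_notMem]
      simp only [mem_Ioi, not_lt] at ht ⊢
      linarith
  simp_rw [ind] at key
  rw [lintegral_indicator measurableSet_Ioi, lintegral_indicator measurableSet_Ioi] at key
  rw [key, ← mul_assoc, ← ENNReal.ofReal_ofNat, ← ENNReal.ofReal_mul (by norm_num)]
  rw [show (2 : ℝ) * |2⁻¹| = 1 by rw [abs_of_pos (by norm_num : (0:ℝ) < 2⁻¹)]; norm_num]
  simp

lemma toSphere_univ_euclidean (d : ℕ) (hd : 0 < d) :
    haveI : Nonempty (Fin d) := ⟨⟨0, hd⟩⟩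
    (volume : Measure (EuclideanSpace ℝ (Fin d))).toSphere univ =
      ENNReal.ofReal (2 * Real.pi ^ ((d:ℝ)/2) / Real.Gamma ((d:ℝ)/2)) := by
  haveI : Nonempty (Fin d) := ⟨⟨0, hd⟩⟩
  rw [Measure.toSphere_apply_univ, EuclideanSpace.volume_ball]
  simp only [Fintype.card_fin, finrank_euclideanSpace_fin, ENNReal.ofReal_one, one_pow, one_mul]
  rw [← ENNReal.ofReal_natCast d, ← ENNReal.ofReal_mul (by positivity)]
  congr 1
  have hΓ : Real.Gamma ((d:ℝ)/2) ≠ 0 :=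
    (Real.Gamma_pos_of_pos (by positivity)).ne'
  have hΓ1 : Real.Gamma ((d:ℝ)/2 + 1) = ((d:ℝ)/2) * Real.Gamma ((d:ℝ)/2) :=
    Real.Gamma_add_one (by positivity)
  have hsq : Real.sqrt Real.pi ^ d = Real.pi ^ ((d:ℝ)/2) := by
    rw [Real.sqrt_eq_rpow, ← Real.rpow_natCast (Real.pi ^ ((1:ℝ)/2)) d,
      ← Real.rpow_mul Real.pi_pos.le]
    ring_nf
  rw [hsq, hΓ1]
  have hdne : (d:ℝ) ≠ 0 := by positivity
  field_simp
/-- Moment bound for the `L¹` norm of the standard deviation of the Gaussian-smoothed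
empirical process: `∫ √Var_μ(φ_σ(x−·)) dx ≤ 8^{d/2} + (2^{d/2+1}/(σ^d Γ(d/2))) ∫₀^∞ t^{d−1}
√ℙ(‖X‖>t) dt`; in particular the left side is finite when `μ` has a finite `(2d+ε)`-th
moment. -/
theorem smoothed_tv_moment_bound
    (d : ℕ) (hd : 0 < d) (σ : ℝ) (hσ : 0 < σ)
    (μ : Measure (EuclideanSpace ℝ (Fin d))) [IsProbabilityMeasure μ] :
    (∫⁻ x, ENNReal.ofReal (Real.sqrt (smoothVar d σ μ x)) ≤
      ENNReal.ofReal ((8 : ℝ) ^ ((d : ℝ) / 2)) +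
      ENNReal.ofReal ((2 : ℝ) ^ ((d : ℝ) / 2 + 1) / (σ ^ d * Real.Gamma ((d : ℝ) / 2))) *
        ∫⁻ t in Set.Ioi (0 : ℝ),
          ENNReal.ofReal (t ^ (d - 1) * Real.sqrt ((μ {y | t < ‖y‖}).toReal)))
    ∧
    ((∃ ε : ℝ, 0 < ε ∧ Integrable (fun y => ‖y‖ ^ ((2 * d : ℝ) + ε)) μ) →
      ∫⁻ x, ENNReal.ofReal (Real.sqrt (smoothVar d σ μ x)) < ⊤) := by
  haveI : Nonempty (Fin d) := ⟨⟨0, hd⟩⟩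
  haveI : Nontrivial (EuclideanSpace ℝ (Fin d)) := by
    apply Module.nontrivial_of_finrank_pos (R := ℝ)
    rw [finrank_euclideanSpace_fin]; exact hd
  set b : ℝ := (2 * Real.pi * σ ^ 2) ^ (-(d : ℝ) / 2) with hbdef
  have hb : 0 < b := Real.rpow_pos_of_pos (by positivity) _
  set g : ℝ → ℝ := fun t => Real.sqrt ((μ {y : EuclideanSpace ℝ (Fin d) | t < ‖y‖}).toReal)
    with hgdef
  have hg0 : ∀ t, 0 ≤ g t := fun t => Real.sqrt_nonneg _
  have hg1 : ∀ t, g t ≤ 1 := by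
    intro t
    rw [hgdef]
    have h1 : (μ {y : EuclideanSpace ℝ (Fin d) | t < ‖y‖}).toReal ≤ 1 := by
      rw [← ENNReal.toReal_one]
      exact ENNReal.toReal_mono ENNReal.one_ne_top prob_le_one
    calc Real.sqrt ((μ {y : EuclideanSpace ℝ (Fin d) | t < ‖y‖}).toReal) ≤ Real.sqrt 1 :=
        Real.sqrt_le_sqrt h1
      _ = 1 := Real.sqrt_one
  have hgm : Measurable g := by
    have anti : Antitone (fun t : ℝ => μ {y : EuclideanSpace ℝ (Fin d) | t < ‖y‖}) := by
      intro s t hst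
      exact measure_mono (fun y hy => lt_of_le_of_lt hst hy)
    exact Real.continuous_sqrt.measurable.comp (ENNReal.measurable_toReal.comp anti.measurable)
  set I : ℝ≥0∞ := ∫⁻ t in Set.Ioi (0 : ℝ), ENNReal.ofReal (t ^ (d - 1) * g t) with hIdef
  set c : ℝ := (2 : ℝ) ^ ((d : ℝ) / 2 + 1) / (σ ^ d * Real.Gamma ((d : ℝ) / 2)) with hcdef
  -- the Gaussian piece
  have gauss_piece : ∫⁻ x : EuclideanSpace ℝ (Fin d),
      ENNReal.ofReal (b * Real.exp (-‖x‖ ^ 2 / (8 * σ ^ 2))) ≤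
      ENNReal.ofReal ((8 : ℝ) ^ ((d : ℝ) / 2)) := by
    have hgauss : Integrable
        (fun x : EuclideanSpace ℝ (Fin d) => Real.exp (-(8 * σ ^ 2)⁻¹ * ‖x‖ ^ 2)) := by
      have h := (GaussianFourier.integrable_cexp_neg_mul_sq_norm_add
        (V := EuclideanSpace ℝ (Fin d)) (b := (((8 * σ ^ 2)⁻¹ : ℝ) : ℂ))
        (by rw [Complex.ofReal_re]; positivity) 0 (0 : EuclideanSpace ℝ (Fin d))).norm
      have heq : (fun v : EuclideanSpace ℝ (Fin d) =>
          ‖Complex.exp (-(((8 * σ ^ 2)⁻¹ : ℝ) : ℂ) * (‖v‖ : ℂ) ^ 2 +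
            0 * ((inner ℝ ((0 : EuclideanSpace ℝ (Fin d))) v : ℝ) : ℂ))‖) =
          fun v : EuclideanSpace ℝ (Fin d) => Real.exp (-(8 * σ ^ 2)⁻¹ * ‖v‖ ^ 2) := by
        funext v
        rw [Complex.norm_exp,
          show -(((8 * σ ^ 2)⁻¹ : ℝ) : ℂ) * (‖v‖ : ℂ) ^ 2 +
              0 * ((inner ℝ ((0 : EuclideanSpace ℝ (Fin d))) v : ℝ) : ℂ) =
              ((-(8 * σ ^ 2)⁻¹ * ‖v‖ ^ 2 : ℝ) : ℂ) by push_cast; ring,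
          Complex.ofReal_re]
      rwa [heq] at h
    have heq2 : ∀ x : EuclideanSpace ℝ (Fin d),
        ENNReal.ofReal (b * Real.exp (-‖x‖ ^ 2 / (8 * σ ^ 2))) =
        ENNReal.ofReal (b * Real.exp (-(8 * σ ^ 2)⁻¹ * ‖x‖ ^ 2)) := by
      intro x
      congr 3
      ring
    calc ∫⁻ x : EuclideanSpace ℝ (Fin d), ENNReal.ofReal (b * Real.exp (-‖x‖ ^ 2 / (8 * σ ^ 2)))
        = ∫⁻ x : EuclideanSpace ℝ (Fin d),
          ENNReal.ofReal (b * Real.exp (-(8 * σ ^ 2)⁻¹ * ‖x‖ ^ 2)) := by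
          exact lintegral_congr heq2
      _ = ENNReal.ofReal (∫ x : EuclideanSpace ℝ (Fin d),
          b * Real.exp (-(8 * σ ^ 2)⁻¹ * ‖x‖ ^ 2)) :=
          (ofReal_integral_eq_lintegral_ofReal (hgauss.const_mul b)
            (ae_of_all _ fun x => by positivity)).symm
      _ ≤ ENNReal.ofReal ((8 : ℝ) ^ ((d : ℝ) / 2)) := by
          apply ENNReal.ofReal_le_ofReal
          rw [integral_const_mul,
            GaussianFourier.integral_rexp_neg_mul_sq_norm (by positivity),
            finrank_euclideanSpace_fin]
          have hπ : Real.pi / (8 * σ ^ 2)⁻¹ = Real.pi * (8 * σ ^ 2) := by field_simp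
          rw [hπ, hbdef, neg_div, Real.rpow_neg (by positivity), inv_mul_eq_div,
            ← Real.div_rpow (by positivity) (by positivity)]
          have h4 : Real.pi * (8 * σ ^ 2) / (2 * Real.pi * σ ^ 2) = 4 := by
            field_simp [Real.pi_ne_zero]
            ring
          rw [h4]
          exact Real.rpow_le_rpow (by norm_num) (by norm_num) (by positivity)
  -- the tail piece
  have tail_piece : ∫⁻ x : EuclideanSpace ℝ (Fin d), ENNReal.ofReal (b * g (‖x‖ / 2)) =
      ENNReal.ofReal c * I := by
    have hΓ : 0 < Real.Gamma ((d:ℝ)/2) := Real.Gamma_pos_of_pos (by positivity)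
    have hFm : Measurable fun t : ℝ => ENNReal.ofReal (b * g (t / 2)) :=
      ENNReal.measurable_ofReal.comp ((hgm.comp (measurable_id.div_const 2)).const_mul b)
    have key : (∫⁻ x : EuclideanSpace ℝ (Fin d), ENNReal.ofReal (b * g (‖x‖ / 2))) =
        (volume : Measure (EuclideanSpace ℝ (Fin d))).toSphere Set.univ *
          ∫⁻ r in Set.Ioi (0:ℝ), ENNReal.ofReal (r ^ (d - 1)) * ENNReal.ofReal (b * g (r / 2)) := by
      have h := my_lintegral_fun_norm_addHaar (volume : Measure (EuclideanSpace ℝ (Fin d)))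
        (fun t => ENNReal.ofReal (b * g (t / 2))) hFm
      rw [finrank_euclideanSpace_fin] at h
      exact h
    rw [key, toSphere_univ_euclidean d hd]
    have scale := lintegral_Ioi_scale
      (fun r => ENNReal.ofReal (r ^ (d - 1)) * ENNReal.ofReal (b * g (r / 2)))
      ((ENNReal.measurable_ofReal.comp (measurable_id.pow_const _)).mul hFm)
    rw [scale]
    have inner : ∀ t ∈ Set.Ioi (0:ℝ),
        ENNReal.ofReal ((2 * t) ^ (d - 1)) * ENNReal.ofReal (b * g (2 * t / 2)) =
        ENNReal.ofReal (2 ^ (d - 1) * b) * ENNReal.ofReal (t ^ (d - 1) * g t) := by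
      intro t ht
      have ht' : (0:ℝ) ≤ t := le_of_lt ht
      rw [show 2 * t / 2 = t by ring, mul_pow,
        ← ENNReal.ofReal_mul (mul_nonneg (by positivity) (pow_nonneg ht' _)),
        ← ENNReal.ofReal_mul (by positivity)]
      congr 1
      ring
    have hmeas2 : Measurable fun t : ℝ => ENNReal.ofReal (t ^ (d - 1) * g t) :=
      ENNReal.measurable_ofReal.comp ((measurable_id.pow_const _).mul hgm)
    rw [setLIntegral_congr_fun measurableSet_Ioi inner,
      lintegral_const_mul _ hmeas2]
    rw [← hIdef, ← mul_assoc, ← mul_assoc]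
    congr 1
    rw [show (2:ℝ≥0∞) = ENNReal.ofReal 2 by simp,
      ← ENNReal.ofReal_mul (by positivity), ← ENNReal.ofReal_mul (by positivity)]
    congr 1
    have hb_eq : b = ((2:ℝ) ^ ((d:ℝ)/2))⁻¹ * (Real.pi ^ ((d:ℝ)/2))⁻¹ * ((σ:ℝ) ^ d)⁻¹ := by
      rw [hbdef, neg_div, Real.rpow_neg (by positivity),
        Real.mul_rpow (by positivity) (by positivity),
        Real.mul_rpow (by positivity) (by positivity)]
      rw [show ((σ:ℝ) ^ 2) ^ ((d:ℝ)/2) = σ ^ d by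
        rw [← Real.rpow_natCast σ 2, ← Real.rpow_mul hσ.le, ← Real.rpow_natCast σ d]
        congr 1
        push_cast; ring]
      rw [mul_inv, mul_inv]
    have h2d : (2:ℝ) * 2 ^ (d - 1) = 2 ^ ((d:ℝ)/2) * 2 ^ ((d:ℝ)/2) := by
      rw [← Real.rpow_add (by norm_num), show (d:ℝ)/2 + (d:ℝ)/2 = ((d:ℕ):ℝ) by ring,
        Real.rpow_natCast, ← pow_succ']
      congr 1
      omega
    have h2d' : (2:ℝ) ^ (d - 1) = 2 ^ ((d:ℝ)/2) * 2 ^ ((d:ℝ)/2) / 2 := by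
      rw [eq_div_iff (two_ne_zero)]
      linarith [h2d]
    have h2p1 : (2:ℝ) ^ ((d:ℝ)/2 + 1) = 2 ^ ((d:ℝ)/2) * 2 :=
      Real.rpow_add_one (by norm_num) _
    have hπp : (0:ℝ) < Real.pi ^ ((d:ℝ)/2) := Real.rpow_pos_of_pos Real.pi_pos _
    have h2p : (0:ℝ) < (2:ℝ) ^ ((d:ℝ)/2) := Real.rpow_pos_of_pos two_pos _
    rw [hcdef, hb_eq, h2p1, h2d']
    field_simp
  have main : ∫⁻ x, ENNReal.ofReal (Real.sqrt (smoothVar d σ μ x)) ≤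
      ENNReal.ofReal ((8 : ℝ) ^ ((d : ℝ) / 2)) + ENNReal.ofReal c * I := by
    have ptw : ∀ x : EuclideanSpace ℝ (Fin d),
        ENNReal.ofReal (Real.sqrt (smoothVar d σ μ x)) ≤
        ENNReal.ofReal (b * Real.exp (-‖x‖ ^ 2 / (8 * σ ^ 2))) +
        ENNReal.ofReal (b * g (‖x‖ / 2)) := by
      intro x
      rw [← ENNReal.ofReal_add (by positivity) (by positivity)]
      exact ENNReal.ofReal_le_ofReal (sqrt_smoothVar_le d σ hσ μ x)
    calc ∫⁻ x, ENNReal.ofReal (Real.sqrt (smoothVar d σ μ x)) ≤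
        ∫⁻ x : EuclideanSpace ℝ (Fin d), (ENNReal.ofReal (b * Real.exp (-‖x‖ ^ 2 / (8 * σ ^ 2))) +
          ENNReal.ofReal (b * g (‖x‖ / 2))) := lintegral_mono ptw
      _ = (∫⁻ x : EuclideanSpace ℝ (Fin d), ENNReal.ofReal (b * Real.exp (-‖x‖ ^ 2 / (8 * σ ^ 2))))
          + ∫⁻ x : EuclideanSpace ℝ (Fin d), ENNReal.ofReal (b * g (‖x‖ / 2)) := by
          apply lintegral_add_left
          apply (ENNReal.continuous_ofReal.comp ?_).measurable
          fun_prop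
      _ ≤ _ := by
          rw [tail_piece]
          exact add_le_add gauss_piece le_rfl
  constructor
  · exact main
  · rintro ⟨ε, hε, hint⟩
    have hI : I < ⊤ := by
      set p : ℝ := (2 * d : ℝ) + ε with hpdef
      have hp0 : (0:ℝ) < p := by positivity
      have hsplit : I = (∫⁻ t in Set.Ioc (0:ℝ) 1, ENNReal.ofReal (t ^ (d - 1) * g t)) +
          ∫⁻ t in Set.Ioi (1:ℝ), ENNReal.ofReal (t ^ (d - 1) * g t) := by
        rw [hIdef, ← Set.Ioc_union_Ioi_eq_Ioi (zero_le_one (α := ℝ)),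
          lintegral_union measurableSet_Ioi (Set.Ioc_disjoint_Ioi le_rfl)]
      rw [hsplit]
      apply ENNReal.add_lt_top.2
      constructor
      · calc (∫⁻ t in Set.Ioc (0:ℝ) 1, ENNReal.ofReal (t ^ (d - 1) * g t)) ≤
            ∫⁻ _ in Set.Ioc (0:ℝ) 1, 1 := by
              apply setLIntegral_mono' measurableSet_Ioc
              intro t ht
              rw [show (1:ℝ≥0∞) = ENNReal.ofReal 1 by simp]
              apply ENNReal.ofReal_le_ofReal
              have h1 : t ^ (d - 1) ≤ 1 := pow_le_one₀ ht.1.le ht.2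
              nlinarith [hg0 t, hg1 t, pow_nonneg ht.1.le (d - 1)]
          _ < ⊤ := by
              rw [setLIntegral_one, Real.volume_Ioc]
              exact ENNReal.ofReal_lt_top
      · set Kr : ℝ := ∫ y, ‖y‖ ^ p ∂μ with hKrdef
        have hKr0 : 0 ≤ Kr :=
          integral_nonneg (fun y => Real.rpow_nonneg (norm_nonneg y) p)
        have markov : ∀ t : ℝ, 1 ≤ t →
            (μ {y : EuclideanSpace ℝ (Fin d) | t < ‖y‖}).toReal ≤ Kr / t ^ p := by
          intro t ht
          have ht0 : (0:ℝ) < t := by linarith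
          have hS : MeasurableSet {y : EuclideanSpace ℝ (Fin d) | t < ‖y‖} :=
            measurableSet_lt measurable_const measurable_norm
          have htp : (0:ℝ) < t ^ p := Real.rpow_pos_of_pos ht0 p
          have h1 : ENNReal.ofReal (t ^ p) * μ {y : EuclideanSpace ℝ (Fin d) | t < ‖y‖} ≤
              ENNReal.ofReal Kr := by
            calc ENNReal.ofReal (t ^ p) * μ {y : EuclideanSpace ℝ (Fin d) | t < ‖y‖}
                = ∫⁻ _ in {y : EuclideanSpace ℝ (Fin d) | t < ‖y‖},
                    ENNReal.ofReal (t ^ p) ∂μ := (setLIntegral_const _ _).symm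
              _ ≤ ∫⁻ y in {y : EuclideanSpace ℝ (Fin d) | t < ‖y‖},
                    ENNReal.ofReal (‖y‖ ^ p) ∂μ := by
                  apply setLIntegral_mono' hS
                  intro y hy
                  exact ENNReal.ofReal_le_ofReal
                    (Real.rpow_le_rpow ht0.le (le_of_lt hy) hp0.le)
              _ ≤ ∫⁻ y, ENNReal.ofReal (‖y‖ ^ p) ∂μ := setLIntegral_le_lintegral _ _
              _ = ENNReal.ofReal Kr :=
                  (ofReal_integral_eq_lintegral_ofReal hint
                    (ae_of_all _ fun y => Real.rpow_nonneg (norm_nonneg y) p)).symm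
          have h2 : μ {y : EuclideanSpace ℝ (Fin d) | t < ‖y‖} ≤
              ENNReal.ofReal Kr / ENNReal.ofReal (t ^ p) := by
            rw [ENNReal.le_div_iff_mul_le (Or.inl (ENNReal.ofReal_pos.2 htp).ne')
              (Or.inl ENNReal.ofReal_ne_top), mul_comm]
            exact h1
          calc (μ {y : EuclideanSpace ℝ (Fin d) | t < ‖y‖}).toReal ≤
              (ENNReal.ofReal Kr / ENNReal.ofReal (t ^ p)).toReal :=
                ENNReal.toReal_mono
                  (ENNReal.div_lt_top ENNReal.ofReal_ne_top
                    (ENNReal.ofReal_pos.2 htp).ne').ne h2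
            _ = Kr / t ^ p := by
                rw [ENNReal.toReal_div, ENNReal.toReal_ofReal hKr0,
                  ENNReal.toReal_ofReal htp.le]
        set q : ℝ := ((d:ℝ) - 1) - p / 2 with hqdef
        have hq : q < -1 := by
          rw [hqdef, hpdef]
          push_cast
          linarith
        have gbound : ∀ t : ℝ, 1 ≤ t →
            t ^ (d - 1) * g t ≤ Real.sqrt Kr * t ^ q := by
          intro t ht
          have ht0 : (0:ℝ) < t := by linarith
          have hcast : t ^ (d - 1) = t ^ ((d:ℝ) - 1) := by
            rw [← Real.rpow_natCast t (d - 1)]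
            congr 1
            rw [Nat.cast_sub hd]
            norm_num
          have h1 : g t ≤ Real.sqrt (Kr / t ^ p) := Real.sqrt_le_sqrt (markov t ht)
          have h2 : Real.sqrt (Kr / t ^ p) = Real.sqrt Kr * (t ^ (p / 2))⁻¹ := by
            rw [Real.sqrt_div hKr0, div_eq_mul_inv]
            congr 2
            rw [Real.sqrt_eq_rpow, ← Real.rpow_mul ht0.le]
            congr 1
            ring
          have h3 : Real.sqrt Kr * t ^ q = t ^ ((d:ℝ) - 1) * (Real.sqrt Kr * (t ^ (p / 2))⁻¹) := by
            rw [hqdef, Real.rpow_sub ht0, div_eq_mul_inv]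
            ring
          rw [hcast, h3]
          apply mul_le_mul_of_nonneg_left _ (Real.rpow_nonneg ht0.le _)
          rw [← h2]
          exact h1
        have hintq : IntegrableOn (fun t : ℝ => Real.sqrt Kr * t ^ q) (Set.Ioi (1:ℝ)) :=
          (integrableOn_Ioi_rpow_of_lt hq one_pos).const_mul _
        calc (∫⁻ t in Set.Ioi (1:ℝ), ENNReal.ofReal (t ^ (d - 1) * g t)) ≤
            ∫⁻ t in Set.Ioi (1:ℝ), ENNReal.ofReal (Real.sqrt Kr * t ^ q) := by
              apply setLIntegral_mono' measurableSet_Ioi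
              intro t ht
              exact ENNReal.ofReal_le_ofReal (gbound t ht.le)
          _ = ENNReal.ofReal (∫ t in Set.Ioi (1:ℝ), Real.sqrt Kr * t ^ q) :=
              (ofReal_integral_eq_lintegral_ofReal hintq
                ((ae_restrict_iff' measurableSet_Ioi).2 (ae_of_all _ fun t ht =>
                  mul_nonneg (Real.sqrt_nonneg _)
                    (Real.rpow_nonneg (by linarith [Set.mem_Ioi.1 ht] : (0:ℝ) ≤ t) q)))).symm
          _ < ⊤ := ENNReal.ofReal_lt_top
    exact lt_of_le_of_lt main (ENNReal.add_lt_top.2 ⟨ENNReal.ofReal_lt_top,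
      ENNReal.mul_lt_top ENNReal.ofReal_lt_top hI⟩)
end
end
end
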